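/- Let θ > 0, λ ∈ ℝ, α < β, and let b, σ, h : ℝ → ℝ be C¹ with σ(x)² > 0 for all x, and let k₊ : ℝ → ℝ be C². Define H₋(x,θ) = (1/2)θσ(x)²k₊(x)² − (1/2)σ(x)²k₊'(x) − b(x)k₊(x) + h(x). Suppose w : ℝ → ℝ is three times continuously differentiable on (α,β), satisfies (1/2)σ(x)²w''(x) + (1/2)θ(σ(x)w'(x))² + b(x)w'(x) + h(x) − λ = 0 for all x ∈ (α,β), and w'(x) → −k₊(α) and w''(x) → −k₊'(α) as x ↓ α. Then w'''(x) + k₊''(x) → −(2/σ(α)²) ∂ₓH₋(α,θ) as x ↓ α. -/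

import Mathlib

open Set Filter Topology

set_option maxHeartbeats 1000000

/-- the third-derivative boundary limit, obtained by
differentiating the Riccati ODE, establishing the strict inequality
`w'' + k₊' > 0` just to the right of the left free boundary. -/
theorem third_derivative_boundary_limit
    (θ lam α β : ℝ) (hθ : 0 < θ) (hαβ : α < β)
    (b σ h : ℝ → ℝ)
    (hb : ContDiff ℝ 1 b) (hσ : ContDiff ℝ 1 σ) (hh : ContDiff ℝ 1 h)
    (hσpos : ∀ x : ℝ, 0 < (σ x) ^ 2)
    (kp : ℝ → ℝ) (hkp : ContDiff ℝ 2 kp)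
    (Hm : ℝ → ℝ)
    (hHm : ∀ x, Hm x = (1 / 2) * θ * (σ x) ^ 2 * (kp x) ^ 2
      - (1 / 2) * (σ x) ^ 2 * deriv kp x - b x * kp x + h x)
    (w : ℝ → ℝ)
    (hw1 : ∀ x ∈ Ioo α β, DifferentiableAt ℝ w x)
    (hw2 : ∀ x ∈ Ioo α β, DifferentiableAt ℝ (deriv w) x)
    (hw3 : ∀ x ∈ Ioo α β, DifferentiableAt ℝ (deriv (deriv w)) x)
    (hw3c : ContinuousOn (deriv (deriv (deriv w))) (Ioo α β))
    (hODE : ∀ x ∈ Ioo α β,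
      (1 / 2) * (σ x) ^ 2 * deriv (deriv w) x
        + (1 / 2) * θ * (σ x * deriv w x) ^ 2
        + b x * deriv w x + h x - lam = 0)
    (hw'lim : Tendsto (deriv w) (𝓝[>] α) (𝓝 (-kp α)))
    (hw''lim : Tendsto (deriv (deriv w)) (𝓝[>] α) (𝓝 (-deriv kp α))) :
    Tendsto (fun x => deriv (deriv (deriv w)) x + deriv (deriv kp) x)
      (𝓝[>] α) (𝓝 (-(2 / (σ α) ^ 2) * deriv Hm α)) := by
  -- regularity of deriv kp
  have hkp2 : ContDiff ℝ 1 (deriv kp) := by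
    have h2 : ContDiff ℝ ((1:ℕ)+1) kp := by exact_mod_cast hkp
    exact_mod_cast (contDiff_succ_iff_deriv.mp h2).2.2
  have hkp1 : ContDiff ℝ 1 kp := hkp.of_le (by norm_num)
  -- the key pointwise identity for w''' on (α, β)
  set F : ℝ → ℝ := fun x => -(2/(σ x)^2) *
      (σ x * deriv σ x * deriv (deriv w) x
        + θ * (σ x * deriv w x) * (deriv σ x * deriv w x + σ x * deriv (deriv w) x)
        + deriv b x * deriv w x + b x * deriv (deriv w) x + deriv h x) with hF
  have key : ∀ x ∈ Ioo α β, deriv (deriv (deriv w)) x = F x := by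
    intro x hx
    have hσx : HasDerivAt σ (deriv σ x) x := (hσ.differentiable one_ne_zero x).hasDerivAt
    have hbx : HasDerivAt b (deriv b x) x := (hb.differentiable one_ne_zero x).hasDerivAt
    have hhx : HasDerivAt h (deriv h x) x := (hh.differentiable one_ne_zero x).hasDerivAt
    have hw2x : HasDerivAt (deriv w) (deriv (deriv w) x) x := (hw2 x hx).hasDerivAt
    have hw3x : HasDerivAt (deriv (deriv w)) (deriv (deriv (deriv w)) x) x :=
      (hw3 x hx).hasDerivAt
    have hG := (((((hσx.pow 2).const_mul ((1:ℝ)/2)).mul hw3x).add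
        (((hσx.mul hw2x).pow 2).const_mul ((1/2) * θ))).add
        ((hbx.mul hw2x).add hhx)).sub_const lam
    have hev : (fun y => (1 / 2) * (σ y) ^ 2 * deriv (deriv w) y
        + ((1 / 2) * θ * (σ y * deriv w y) ^ 2)
        + (b y * deriv w y + h y) - lam) =ᶠ[𝓝 x] (fun _ => (0:ℝ)) := by
      filter_upwards [isOpen_Ioo.mem_nhds hx] with y hy
      have := hODE y hy; linarith
    have hD0 : ((1:ℝ)/2) * (2 * σ x ^ 1 * deriv σ x) * deriv (deriv w) x
        + (1/2) * (σ x)^2 * deriv (deriv (deriv w)) x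
        + ((1/2) * θ) * (2 * (σ x * deriv w x) ^ 1 *
            (deriv σ x * deriv w x + σ x * deriv (deriv w) x))
        + (deriv b x * deriv w x + b x * deriv (deriv w) x + deriv h x) = 0 := by
      have h1 := hG.deriv
      simp only [Pi.mul_apply, Pi.add_apply, Pi.pow_apply] at h1
      rw [hev.deriv_eq] at h1
      simpa using h1.symm
    have hne : (σ x)^2 ≠ 0 := ne_of_gt (hσpos x)
    rw [hF]
    field_simp
    rw [neg_div', eq_div_iff hne]
    linear_combination 2 * hD0
  -- the limit of F as x ↓ α
  have tle : (𝓝[>] α : Filter ℝ) ≤ 𝓝 α := nhdsWithin_le_nhds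
  have tσ : Tendsto σ (𝓝[>] α) (𝓝 (σ α)) := (hσ.continuous.tendsto α).mono_left tle
  have tσ' : Tendsto (deriv σ) (𝓝[>] α) (𝓝 (deriv σ α)) :=
    ((hσ.continuous_deriv le_rfl).tendsto α).mono_left tle
  have tb : Tendsto b (𝓝[>] α) (𝓝 (b α)) := (hb.continuous.tendsto α).mono_left tle
  have tb' : Tendsto (deriv b) (𝓝[>] α) (𝓝 (deriv b α)) :=
    ((hb.continuous_deriv le_rfl).tendsto α).mono_left tle
  have th' : Tendsto (deriv h) (𝓝[>] α) (𝓝 (deriv h α)) :=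
    ((hh.continuous_deriv le_rfl).tendsto α).mono_left tle
  have tkp'' : Tendsto (deriv (deriv kp)) (𝓝[>] α) (𝓝 (deriv (deriv kp) α)) :=
    ((hkp2.continuous_deriv le_rfl).tendsto α).mono_left tle
  have tFsum : Tendsto (fun x => F x + deriv (deriv kp) x) (𝓝[>] α)
      (𝓝 (-(2/(σ α)^2) *
        (σ α * deriv σ α * (-deriv kp α)
          + θ * (σ α * (-kp α)) * (deriv σ α * (-kp α) + σ α * (-deriv kp α))
          + deriv b α * (-kp α) + b α * (-deriv kp α) + deriv h α)
        + deriv (deriv kp) α)) := by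
    have tσ2 : Tendsto (fun x => (σ x)^2) (𝓝[>] α) (𝓝 ((σ α)^2)) := tσ.pow 2
    have tinv : Tendsto (fun x => -(2/(σ x)^2)) (𝓝[>] α) (𝓝 (-(2/(σ α)^2))) :=
      ((tendsto_const_nhds.div tσ2 (ne_of_gt (hσpos α)))).neg
    have t1 : Tendsto (fun x => σ x * deriv σ x * deriv (deriv w) x) (𝓝[>] α)
        (𝓝 (σ α * deriv σ α * (-deriv kp α))) := (tσ.mul tσ').mul hw''lim
    have t2 : Tendsto (fun x => θ * (σ x * deriv w x) *
        (deriv σ x * deriv w x + σ x * deriv (deriv w) x)) (𝓝[>] α)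
        (𝓝 (θ * (σ α * (-kp α)) * (deriv σ α * (-kp α) + σ α * (-deriv kp α)))) :=
      (tendsto_const_nhds.mul (tσ.mul hw'lim)).mul ((tσ'.mul hw'lim).add (tσ.mul hw''lim))
    have t3 : Tendsto (fun x => deriv b x * deriv w x) (𝓝[>] α)
        (𝓝 (deriv b α * (-kp α))) := tb'.mul hw'lim
    have t4 : Tendsto (fun x => b x * deriv (deriv w) x) (𝓝[>] α)
        (𝓝 (b α * (-deriv kp α))) := tb.mul hw''lim
    rw [hF]
    exact (tinv.mul (((((t1.add t2).add t3).add t4).add th'))).add tkp''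
  -- identify the limit with the target constant
  have hkpα : HasDerivAt kp (deriv kp α) α := (hkp1.differentiable one_ne_zero α).hasDerivAt
  have hkp'α : HasDerivAt (deriv kp) (deriv (deriv kp) α) α :=
    (hkp2.differentiable one_ne_zero α).hasDerivAt
  have hσα : HasDerivAt σ (deriv σ α) α := (hσ.differentiable one_ne_zero α).hasDerivAt
  have hbα : HasDerivAt b (deriv b α) α := (hb.differentiable one_ne_zero α).hasDerivAt
  have hhα : HasDerivAt h (deriv h α) α := (hh.differentiable one_ne_zero α).hasDerivAt
  have hHmd : HasDerivAt Hm
      ((((1:ℝ)/2) * θ * (2 * σ α ^ 1 * deriv σ α)) * (kp α)^2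
        + ((1/2) * θ * (σ α)^2) * (2 * kp α ^ 1 * deriv kp α)
        - ((((1:ℝ)/2) * (2 * σ α ^ 1 * deriv σ α)) * deriv kp α
            + ((1/2) * (σ α)^2) * deriv (deriv kp) α)
        - (deriv b α * kp α + b α * deriv kp α) + deriv h α) α := by
    have hfun : Hm = fun x => (1 / 2) * θ * (σ x) ^ 2 * (kp x) ^ 2
        - (1 / 2) * (σ x) ^ 2 * deriv kp x - b x * kp x + h x := funext hHm
    rw [hfun]
    exact (((((hσα.pow 2).const_mul ((1/2) * θ)).mul (hkpα.pow 2)).sub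
      (((hσα.pow 2).const_mul ((1:ℝ)/2)).mul hkp'α)).sub (hbα.mul hkpα)).add hhα
  have hHm' := hHmd.deriv
  have heq : (-(2/(σ α)^2) *
        (σ α * deriv σ α * (-deriv kp α)
          + θ * (σ α * (-kp α)) * (deriv σ α * (-kp α) + σ α * (-deriv kp α))
          + deriv b α * (-kp α) + b α * (-deriv kp α) + deriv h α)
        + deriv (deriv kp) α) = -(2 / (σ α) ^ 2) * deriv Hm α := by
    rw [hHm']
    have hne : (σ α)^2 ≠ 0 := ne_of_gt (hσpos α)
    field_simp
    have hσ0 : σ α ≠ 0 := fun h0 => hne (by rw [h0]; ring)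
    have hs : σ α * (σ α)⁻¹ = 1 := mul_inv_cancel₀ hσ0
    linear_combination (-(1 + σ α * (σ α)⁻¹) * deriv (deriv kp) α) * hs
  rw [← heq]
  refine tFsum.congr' ?_
  filter_upwards [Ioo_mem_nhdsGT_of_mem (⟨le_refl α, hαβ⟩ : α ∈ Ico α β)] with x hx
  rw [key x hx]
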